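/- arXiv:1807.07220 — 2 statements merged into one kernel-verified Lean document; each statement's English description precedes it below -/
import Mathlib

section
/- Let A be a symmetric positive definite real n×n matrix and B a real m×n matrix of rank m. Then the saddle-point matrix L = [[A, Bᵀ],[B, 0]] has exactly n positive eigenvalues and exactly m negative eigenvalues (counted with multiplicity). -/
open Matrix

section aux

variable {ι : Type*} [Fintype ι] [DecidableEq ι]

/-- Extension by zero of a vector indexed by a finset. -/
def extZero (T : Finset ι) : ({i // i ∈ T} → ℝ) →ₗ[ℝ] (ι → ℝ) where
  toFun c i := if h : i ∈ T then c ⟨i, h⟩ else 0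
  map_add' c d := funext fun i => by by_cases h : i ∈ T <;> simp [h]
  map_smul' r c := funext fun i => by by_cases h : i ∈ T <;> simp [h]

lemma extZero_injective (T : Finset ι) : Function.Injective (extZero T) := by
  intro c d h
  funext i
  have := congrFun h i.1
  simpa [extZero, i.2] using this

lemma extZero_apply_not_mem (T : Finset ι) (c : {i // i ∈ T} → ℝ) {i : ι} (hi : i ∉ T) :
    extZero T c i = 0 := by
  simp [extZero, hi]

lemma star_mul_self_eigenvectorUnitary {L : Matrix ι ι ℝ} (hL : L.IsHermitian) :
    (star (hL.eigenvectorUnitary : Matrix ι ι ℝ)) * (hL.eigenvectorUnitary : Matrix ι ι ℝ) = 1 :=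
  Unitary.coe_star_mul_self hL.eigenvectorUnitary

lemma mul_eigenvectorUnitary {L : Matrix ι ι ℝ} (hL : L.IsHermitian) :
    L * (hL.eigenvectorUnitary : Matrix ι ι ℝ) =
      (hL.eigenvectorUnitary : Matrix ι ι ℝ) * diagonal hL.eigenvalues := by
  set U : Matrix ι ι ℝ := (hL.eigenvectorUnitary : Matrix ι ι ℝ) with hUdef
  conv_lhs => rw [hL.spectral_theorem]
  rw [Unitary.conjStarAlgAut_apply, ← hUdef, mul_assoc, mul_assoc, star_mul_self_eigenvectorUnitary hL, mul_one, RCLike.ofReal_real_eq_id]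
  simp [Function.comp]

lemma quad_eq_sum {L : Matrix ι ι ℝ} (hL : L.IsHermitian) (w : ι → ℝ) :
    ((hL.eigenvectorUnitary : Matrix ι ι ℝ) *ᵥ w) ⬝ᵥ
      (L *ᵥ ((hL.eigenvectorUnitary : Matrix ι ι ℝ) *ᵥ w)) = ∑ i, hL.eigenvalues i * w i ^ 2 := by
  set U : Matrix ι ι ℝ := (hL.eigenvectorUnitary : Matrix ι ι ℝ) with hUdef
  have hU1 : star U * U = 1 := star_mul_self_eigenvectorUnitary hL
  have hUt : Uᵀ * U = 1 := by
    rw [← conjTranspose_eq_transpose_of_trivial, ← star_eq_conjTranspose]; exact hU1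
  rw [mulVec_mulVec, mul_eigenvectorUnitary hL, ← hUdef, ← mulVec_mulVec,
    dotProduct_mulVec, vecMul_mulVec, hUt, vecMul_one]
  simp only [dotProduct, mulVec_diagonal]
  exact Finset.sum_congr rfl fun i _ => by ring

end aux

section aux2

variable {ι : Type*} [Fintype ι] [DecidableEq ι]

lemma eigenSubspace {L : Matrix ι ι ℝ} (hL : L.IsHermitian) (T : Finset ι) :
    ∃ E : Submodule ℝ (ι → ℝ), Module.finrank ℝ E = T.card ∧
      ∀ v ∈ E, ∃ w : ι → ℝ, (∀ i ∉ T, w i = 0) ∧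
        v ⬝ᵥ (L *ᵥ v) = ∑ i, hL.eigenvalues i * w i ^ 2 := by
  set U : Matrix ι ι ℝ := (hL.eigenvectorUnitary : Matrix ι ι ℝ) with hUdef
  have hU1 : star U * U = 1 := star_mul_self_eigenvectorUnitary hL
  have hUt : Uᵀ * U = 1 := by
    rw [← conjTranspose_eq_transpose_of_trivial, ← star_eq_conjTranspose]; exact hU1
  have hUinj : Function.Injective U.mulVecLin := by
    intro a b hab
    have := congrArg (fun z => Uᵀ *ᵥ z) hab
    simpa [mulVec_mulVec, hUt] using this
  refine ⟨LinearMap.range (U.mulVecLin.comp (extZero T)), ?_, ?_⟩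
  · have hinj : Function.Injective (U.mulVecLin.comp (extZero T)) := by
      rw [LinearMap.coe_comp]
      exact hUinj.comp (extZero_injective T)
    rw [LinearMap.finrank_range_of_inj hinj]
    simp [Module.finrank_fintype_fun_eq_card]
  · rintro v ⟨c, rfl⟩
    refine ⟨extZero T c, fun i hi => extZero_apply_not_mem T c hi, ?_⟩
    simpa using quad_eq_sum hL (extZero T c)

end aux2

/-- If `A` is a symmetric positive definite real `n × n` matrix and `B` is a real `m × n`
matrix of rank `m`, then the saddle-point matrix `L = [[A, Bᵀ],[B, 0]]` (which is real
symmetric, hence has real eigenvalues) has exactly `n` positive eigenvalues and exactly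
`m` negative eigenvalues, counted with multiplicity. -/
theorem saddle_point_matrix_eigenvalue_signs {n m : ℕ}
    (A : Matrix (Fin n) (Fin n) ℝ) (B : Matrix (Fin m) (Fin n) ℝ)
    (hA_symm : A.IsSymm) (hA_pd : A.PosDef) (hB : B.rank = m)
    (hL : (Matrix.fromBlocks A Bᵀ B (0 : Matrix (Fin m) (Fin m) ℝ)).IsHermitian) :
    (Finset.univ.filter fun i => 0 < hL.eigenvalues i).card = n ∧
    (Finset.univ.filter fun i => hL.eigenvalues i < 0).card = m := by
  classical
  set L := Matrix.fromBlocks A Bᵀ B (0 : Matrix (Fin m) (Fin m) ℝ) with hLdef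
  set lam := hL.eigenvalues with hlamdef
  -- basic facts about A and B
  have hAdet : IsUnit A.det := (Matrix.isUnit_iff_isUnit_det A).mp hA_pd.isUnit
  have hAAinv : A * A⁻¹ = 1 := mul_nonsing_inv A hAdet
  have hAinv_pd : A⁻¹.PosDef := hA_pd.inv
  have hBt : ∀ y : Fin m → ℝ, y ≠ 0 → Bᵀ *ᵥ y ≠ 0 := by
    have hker : LinearMap.ker Bᵀ.mulVecLin = ⊥ := by
      have h1 := LinearMap.finrank_range_add_finrank_ker Bᵀ.mulVecLin
      have h2 : Module.finrank ℝ (LinearMap.range Bᵀ.mulVecLin) = m := by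
        have h5 : Bᵀ.rank = m := by rw [Matrix.rank_transpose, hB]
        simpa [Matrix.rank] using h5
      have h4 : Module.finrank ℝ ((Fin m) → ℝ) = m := by simp
      have h3 : Module.finrank ℝ (LinearMap.ker Bᵀ.mulVecLin) = 0 := by omega
      exact Submodule.finrank_eq_zero.mp h3
    intro y hy hzero
    have hmem : y ∈ LinearMap.ker Bᵀ.mulVecLin := by
      rw [LinearMap.mem_ker, Matrix.mulVecLin_apply]; exact hzero
    rw [hker] at hmem
    exact hy (by simpa using hmem)
  -- the positive subspace
  let f₁ : (Fin n → ℝ) →ₗ[ℝ] (Fin n ⊕ Fin m → ℝ) :=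
    { toFun := fun x => Sum.elim x 0
      map_add' := fun x y => funext fun i => by cases i <;> simp
      map_smul' := fun r x => funext fun i => by cases i <;> simp }
  have hf₁inj : Function.Injective f₁ := by
    intro a b hab
    funext i
    exact congrFun hab (Sum.inl i)
  have hW1rank : Module.finrank ℝ (LinearMap.range f₁) = n := by
    rw [LinearMap.finrank_range_of_inj hf₁inj]; simp
  have hW1pos : ∀ v ∈ LinearMap.range f₁, v ≠ 0 → 0 < v ⬝ᵥ (L *ᵥ v) := by
    rintro v ⟨x, rfl⟩ hv
    have hx : x ≠ 0 := by
      rintro rfl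
      exact hv (funext fun i => by cases i <;> simp [f₁])
    have hLv : L *ᵥ (Sum.elim x 0) = Sum.elim (A *ᵥ x) (B *ᵥ x) := by
      rw [hLdef, fromBlocks_mulVec]; simp
    have hfx : f₁ x = Sum.elim x 0 := rfl
    have hquad : (f₁ x) ⬝ᵥ (L *ᵥ (f₁ x)) = x ⬝ᵥ (A *ᵥ x) := by
      rw [hfx, hLv, sumElim_dotProduct_sumElim]; simp
    rw [hquad]
    simpa using hA_pd.dotProduct_mulVec_pos hx
  -- the negative subspace
  let f₂ : (Fin m → ℝ) →ₗ[ℝ] (Fin n ⊕ Fin m → ℝ) :=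
    { toFun := fun y => Sum.elim (-((A⁻¹ * Bᵀ) *ᵥ y)) y
      map_add' := fun x y => funext fun i => by
        cases i <;> simp [Matrix.mulVec_add] <;> ring
      map_smul' := fun r x => funext fun i => by
        cases i <;> simp [Matrix.mulVec_smul] }
  have hf₂inj : Function.Injective f₂ := by
    intro a b hab
    funext i
    exact congrFun hab (Sum.inr i)
  have hW2rank : Module.finrank ℝ (LinearMap.range f₂) = m := by
    rw [LinearMap.finrank_range_of_inj hf₂inj]; simp
  have hW2neg : ∀ v ∈ LinearMap.range f₂, v ≠ 0 → v ⬝ᵥ (L *ᵥ v) < 0 := by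
    rintro v ⟨y, rfl⟩ hv
    have hy : y ≠ 0 := by
      rintro rfl
      exact hv (funext fun i => by cases i <;> simp [f₂])
    have hxA : A *ᵥ (-((A⁻¹ * Bᵀ) *ᵥ y)) = -(Bᵀ *ᵥ y) := by
      rw [Matrix.mulVec_neg, Matrix.mulVec_mulVec, ← Matrix.mul_assoc, hAAinv, Matrix.one_mul]
    have hLv : L *ᵥ (Sum.elim (-((A⁻¹ * Bᵀ) *ᵥ y)) y)
        = Sum.elim (0 : Fin n → ℝ) (B *ᵥ (-((A⁻¹ * Bᵀ) *ᵥ y))) := by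
      rw [hLdef, fromBlocks_mulVec]
      simp only [Sum.elim_comp_inl, Sum.elim_comp_inr, hxA, Matrix.zero_mulVec, add_zero,
        neg_add_cancel]
    have hfy : f₂ y = Sum.elim (-((A⁻¹ * Bᵀ) *ᵥ y)) y := rfl
    have hquad : (f₂ y) ⬝ᵥ (L *ᵥ (f₂ y))
        = -((Bᵀ *ᵥ y) ⬝ᵥ (A⁻¹ *ᵥ (Bᵀ *ᵥ y))) := by
      rw [hfy, hLv, sumElim_dotProduct_sumElim, dotProduct_zero, zero_add,
        dotProduct_mulVec, ← mulVec_transpose, ← Matrix.mulVec_mulVec,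
        dotProduct_neg]
    rw [hquad]
    have := hAinv_pd.dotProduct_mulVec_pos (hBt y hy)
    simp only [star_trivial] at this
    linarith
  -- eigen subspaces
  obtain ⟨E1, hE1rank, hE1⟩ := eigenSubspace hL (Finset.univ.filter fun i => ¬ 0 < lam i)
  obtain ⟨E2, hE2rank, hE2⟩ := eigenSubspace hL (Finset.univ.filter fun i => ¬ lam i < 0)
  have hE1le : ∀ v ∈ E1, v ⬝ᵥ (L *ᵥ v) ≤ 0 := by
    intro v hv
    obtain ⟨w, hw, heq⟩ := hE1 v hv
    rw [heq]
    apply Finset.sum_nonpos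
    intro i _
    by_cases hi : i ∈ Finset.univ.filter fun i => ¬ 0 < lam i
    · have : lam i ≤ 0 := not_lt.mp (Finset.mem_filter.mp hi).2
      exact mul_nonpos_of_nonpos_of_nonneg this (sq_nonneg _)
    · simp [hw i hi]
  have hE2ge : ∀ v ∈ E2, 0 ≤ v ⬝ᵥ (L *ᵥ v) := by
    intro v hv
    obtain ⟨w, hw, heq⟩ := hE2 v hv
    rw [heq]
    apply Finset.sum_nonneg
    intro i _
    by_cases hi : i ∈ Finset.univ.filter fun i => ¬ lam i < 0
    · have : 0 ≤ lam i := not_lt.mp (Finset.mem_filter.mp hi).2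
      exact mul_nonneg this (sq_nonneg _)
    · simp [hw i hi]
  -- disjointness and rank inequalities
  have hd1 : Disjoint (LinearMap.range f₁) E1 := by
    rw [Submodule.disjoint_def]
    intro v hv1 hv2
    by_contra hne
    exact absurd (hE1le v hv2) (not_le.mpr (hW1pos v hv1 hne))
  have hd2 : Disjoint (LinearMap.range f₂) E2 := by
    rw [Submodule.disjoint_def]
    intro v hv1 hv2
    by_contra hne
    exact absurd (hE2ge v hv2) (not_le.mpr (hW2neg v hv1 hne))
  have htot : Module.finrank ℝ (Fin n ⊕ Fin m → ℝ) = n + m := by simp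
  have hle1 := Submodule.finrank_add_finrank_le_of_disjoint hd1
  have hle2 := Submodule.finrank_add_finrank_le_of_disjoint hd2
  rw [htot, hW1rank, hE1rank] at hle1
  rw [htot, hW2rank, hE2rank] at hle2
  -- counting
  have hcard : (Finset.univ : Finset (Fin n ⊕ Fin m)).card = n + m := by simp
  have hc1 := Finset.card_filter_add_card_filter_not
    (s := (Finset.univ : Finset (Fin n ⊕ Fin m))) (p := fun i => 0 < lam i)
  have hc2 := Finset.card_filter_add_card_filter_not
    (s := (Finset.univ : Finset (Fin n ⊕ Fin m))) (p := fun i => lam i < 0)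
  rw [hcard] at hc1 hc2
  have hsub : (Finset.univ.filter fun i => 0 < lam i)
      ⊆ Finset.univ.filter fun i => ¬ lam i < 0 := by
    intro i hi
    simp only [Finset.mem_filter, Finset.mem_univ, true_and] at hi ⊢
    exact asymm hi
  have hsubcard := Finset.card_le_card hsub
  omega
end

section
/- Let A be a symmetric positive definite real n×n matrix, B a real m×n matrix, F ∈ ℝ^m, and v̄ ∈ ℝ^n an arbitrary vector. For i = 1, …, N let Π_{v,i} be a real n_i×n matrix and Π_{p,i} a real m_i×m matrix, and assume: (i) the local saddle-point matrices L_i = [[Π_{v,i} A Π_{v,i}ᵀ, Π_{v,i} Bᵀ Π_{p,i}ᵀ],[Π_{p,i} B Π_{v,i}ᵀ, 0]] are invertible; (ii) the pressure restrictions form a partition of unity: Σ_{i=1}^N Π_{p,i}ᵀ Π_{p,i} = I_m; (iii) locality holds: B Π_{v,i}ᵀ = Π_{p,i}ᵀ Π_{p,i} B Π_{v,i}ᵀ for each i. Define (u_i, q_i) = L_i^{-1}(Π_{v,i}(−A v̄), Π_{p,i}(F − B v̄)) and v̄_i = Π_{v,i}ᵀ u_i. Then B (v̄ + v̄_1 +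 ⋯ + v̄_N) = F. -/
open Matrix

/-- Preprocessing, local corrections: let `A` be symmetric positive definite, `B` real
`m × n`, `F ∈ ℝ^m`, `v̄ ∈ ℝ^n`. For `i = 1, …, N`, let `Pv i` and `Pp i` be local velocity
and pressure restriction matrices with (i) the local saddle-point matrices
`L_i = [[Pv i * A * (Pv i)ᵀ, Pv i * Bᵀ * (Pp i)ᵀ],[Pp i * B * (Pv i)ᵀ, 0]]` invertible,
(ii) partition of unity `∑ i, (Pp i)ᵀ * Pp i = 1`, and (iii) locality
`B * (Pv i)ᵀ = (Pp i)ᵀ * Pp i * (B * (Pv i)ᵀ)`. With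
`(u_i, q_i) = L_i⁻¹ (Pv i *ᵥ (-(A *ᵥ v̄)), Pp i *ᵥ (F - B *ᵥ v̄))` and
`v̄_i = (Pv i)ᵀ *ᵥ u_i`, one has `B (v̄ + v̄_1 + ⋯ + v̄_N) = F`. -/
theorem preprocessing_flux_exact {n m N : ℕ}
    (A : Matrix (Fin n) (Fin n) ℝ) (B : Matrix (Fin m) (Fin n) ℝ)
    (hA_symm : A.IsSymm) (hA_pd : A.PosDef)
    (F : Fin m → ℝ) (vbar : Fin n → ℝ)
    (ni mi : Fin N → ℕ)
    (Pv : ∀ i, Matrix (Fin (ni i)) (Fin n) ℝ)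
    (Pp : ∀ i, Matrix (Fin (mi i)) (Fin m) ℝ)
    (L : ∀ i, Matrix (Fin (ni i) ⊕ Fin (mi i)) (Fin (ni i) ⊕ Fin (mi i)) ℝ)
    (hL : ∀ i, L i = Matrix.fromBlocks (Pv i * A * (Pv i)ᵀ) (Pv i * Bᵀ * (Pp i)ᵀ)
      (Pp i * B * (Pv i)ᵀ) (0 : Matrix (Fin (mi i)) (Fin (mi i)) ℝ))
    (hinv : ∀ i, IsUnit (L i))
    (hpart : ∑ i, (Pp i)ᵀ * Pp i = (1 : Matrix (Fin m) (Fin m) ℝ))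
    (hloc : ∀ i, B * (Pv i)ᵀ = (Pp i)ᵀ * Pp i * (B * (Pv i)ᵀ))
    (u : ∀ i, Fin (ni i) → ℝ)
    (hu : ∀ i, u i = fun j =>
      ((L i)⁻¹ *ᵥ Sum.elim (Pv i *ᵥ (-(A *ᵥ vbar))) (Pp i *ᵥ (F - B *ᵥ vbar))) (Sum.inl j)) :
    B *ᵥ (vbar + ∑ i, (Pv i)ᵀ *ᵥ u i) = F := by
  -- key local identity: the second block row of the local system
  have key : ∀ i, (Pp i * B * (Pv i)ᵀ) *ᵥ u i = Pp i *ᵥ (F - B *ᵥ vbar) := by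
    intro i
    set rhs : Fin (ni i) ⊕ Fin (mi i) → ℝ :=
      Sum.elim (Pv i *ᵥ (-(A *ᵥ vbar))) (Pp i *ᵥ (F - B *ᵥ vbar)) with hrhs
    set w : Fin (ni i) ⊕ Fin (mi i) → ℝ := (L i)⁻¹ *ᵥ rhs with hwdef
    have hw : L i *ᵥ w = rhs := by
      rw [hwdef, mulVec_mulVec,
        Matrix.mul_nonsing_inv _ ((Matrix.isUnit_iff_isUnit_det _).mp (hinv i)), one_mulVec]
    have hsplit : w = Sum.elim (u i) (fun j => w (Sum.inr j)) := by
      funext x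
      cases x with
      | inl j => simp [hu i, hwdef, hrhs]
      | inr j => simp
    rw [hsplit, hL i, Matrix.fromBlocks_mulVec] at hw
    have := congrFun hw
    have h2 : (Pp i * B * (Pv i)ᵀ) *ᵥ u i + (0 : Matrix (Fin (mi i)) (Fin (mi i)) ℝ) *ᵥ
        (fun j => w (Sum.inr j)) = Pp i *ᵥ (F - B *ᵥ vbar) := by
      funext j
      simpa [hrhs] using this (Sum.inr j)
    simpa using h2
  have hsum : B *ᵥ (∑ i, (Pv i)ᵀ *ᵥ u i) = F - B *ᵥ vbar := by
    have : ∀ i, B *ᵥ ((Pv i)ᵀ *ᵥ u i) = ((Pp i)ᵀ * Pp i) *ᵥ (F - B *ᵥ vbar) := by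
      intro i
      rw [mulVec_mulVec, hloc i, Matrix.mul_assoc, ← mulVec_mulVec, ← Matrix.mul_assoc,
        key i, mulVec_mulVec]
    have hsum2 : ∀ (s : Finset (Fin N)),
        (∑ i ∈ s, ((Pp i)ᵀ * Pp i)) *ᵥ (F - B *ᵥ vbar)
          = ∑ i ∈ s, ((Pp i)ᵀ * Pp i) *ᵥ (F - B *ᵥ vbar) := by
      intro s
      induction s using Finset.induction with
      | empty => simp
      | insert a s h ih => rw [Finset.sum_insert h, Finset.sum_insert h, add_mulVec, ih]
    simp only [← Matrix.mulVecLin_apply, map_sum]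
    simp only [Matrix.mulVecLin_apply]
    simp_rw [this]
    rw [← hsum2, hpart, one_mulVec]
  rw [mulVec_add, hsum]
  abel
end
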